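/- Theorem 2 (L-LMMSE MSE under pilot contamination): Let L, K be positive integers, let R_t be an L×L Hermitian positive definite complex matrix with eigenvalues δ_1,…,δ_L, let A be a K×L complex matrix with AᴴA = K·E_x·I_L for some E_x > 0, let σ_w² > 0, set ρ = E_x/σ_w², and let σ_𝓘² ≥ 0. Then trace((R_t⁻¹ + Aᴴ(σ_w²·I_K + σ_𝓘²·A·R_t·Aᴴ)⁻¹A)⁻¹) = Σ_{i=1}^{L} δ_i·(1 + ρK·δ_i·σ_𝓘²)/(1 + ρK·δ_i + ρK·δ_i·σ_𝓘²). (Summing over R identical antennas gives the total localized LMMSE MSE under AWGN and pilot contamination, MSE^{(L)} = R·Σ_i δ_i(1+ρKδ_iσ_𝓘²)/(1+ρKδ_i+ρKδ_iσ_𝓘²).) -/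

import Mathlib

open Matrix
open scoped ComplexOrder

lemma my_smul_posSemidef {n : Type*} [Fintype n] {B : Matrix n n ℂ} (hB : B.PosSemidef)
    {c : ℝ} (hc : 0 ≤ c) : ((c : ℂ) • B).PosSemidef := by
  constructor
  · unfold Matrix.IsHermitian
    rw [conjTranspose_smul, hB.1.eq, Complex.star_def, Complex.conj_ofReal]
  · intro x
    rw [show (x.sum fun i xi => x.sum fun j xj => star xi * ((c : ℂ) • B) i j * xj)
        = (c : ℂ) * x.sum fun i xi => x.sum fun j xj => star xi * B i j * xj by
      rw [Finsupp.mul_sum]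
      refine Finsupp.sum_congr fun i _ => ?_
      rw [Finsupp.mul_sum]
      refine Finsupp.sum_congr fun j _ => ?_
      rw [Matrix.smul_apply, smul_eq_mul]; ring]
    exact mul_nonneg (by exact_mod_cast hc) (hB.2 x)

lemma my_smul_posDef {n : Type*} [Fintype n] {B : Matrix n n ℂ} (hB : B.PosDef)
    {c : ℝ} (hc : 0 < c) : ((c : ℂ) • B).PosDef := by
  constructor
  · unfold Matrix.IsHermitian
    rw [conjTranspose_smul, hB.1.eq, Complex.star_def, Complex.conj_ofReal]
  · intro x hx
    rw [show (x.sum fun i xi => x.sum fun j xj => star xi * ((c : ℂ) • B) i j * xj)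
        = (c : ℂ) * x.sum fun i xi => x.sum fun j xj => star xi * B i j * xj by
      rw [Finsupp.mul_sum]
      refine Finsupp.sum_congr fun i _ => ?_
      rw [Finsupp.mul_sum]
      refine Finsupp.sum_congr fun j _ => ?_
      rw [Matrix.smul_apply, smul_eq_mul]; ring]
    exact mul_pos (by exact_mod_cast hc) (hB.2 hx)

lemma my_conj_inv {L : ℕ} (U : Matrix (Fin L) (Fin L) ℂ) (hU : U * Uᴴ = 1) (hU' : Uᴴ * U = 1)
    (v : Fin L → ℂ) (hv : ∀ i, v i ≠ 0) :
    (U * Matrix.diagonal v * Uᴴ)⁻¹ = U * Matrix.diagonal (fun i => (v i)⁻¹) * Uᴴ := by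
  apply Matrix.inv_eq_right_inv
  have h1 : (U * Matrix.diagonal v * Uᴴ) * (U * Matrix.diagonal (fun i => (v i)⁻¹) * Uᴴ)
      = U * (Matrix.diagonal v * (Uᴴ * U) * Matrix.diagonal (fun i => (v i)⁻¹)) * Uᴴ := by
    simp only [Matrix.mul_assoc]
  rw [h1, hU', mul_one, diagonal_mul_diagonal]
  have h2 : (fun i => v i * (v i)⁻¹) = fun _ => (1 : ℂ) := by
    funext i; exact mul_inv_cancel₀ (hv i)
  rw [h2, diagonal_one, mul_one, hU]

theorem llmmse_mse_pilot_contamination {L K : ℕ} (hL : 0 < L) (hK : 0 < K)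
    (Rt : Matrix (Fin L) (Fin L) ℂ) (hRt : Rt.PosDef)
    (δ : Fin L → ℝ) (hδ : hRt.isHermitian.eigenvalues = δ)
    (A : Matrix (Fin K) (Fin L) ℂ) (Ex : ℝ) (hEx : 0 < Ex)
    (hA : Aᴴ * A = (((K : ℝ) * Ex : ℝ) : ℂ) • (1 : Matrix (Fin L) (Fin L) ℂ))
    (σw2 : ℝ) (hσw : 0 < σw2) (σI2 : ℝ) (hσI : 0 ≤ σI2)
    (ρ : ℝ) (hρ : ρ = Ex / σw2) :
    Matrix.trace (Rt⁻¹ + Aᴴ *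
        ((σw2 : ℂ) • (1 : Matrix (Fin K) (Fin K) ℂ) + (σI2 : ℂ) • (A * Rt * Aᴴ))⁻¹
        * A)⁻¹
      = ∑ i, ((δ i * (1 + ρ * K * δ i * σI2) /
          (1 + ρ * K * δ i + ρ * K * δ i * σI2) : ℝ) : ℂ) := by
  set c : ℝ := (K : ℝ) * Ex with hc_def
  have hc : 0 < c := mul_pos (by exact_mod_cast hK) hEx
  have hδpos : ∀ i, 0 < δ i := by
    intro i; rw [← hδ]; exact hRt.eigenvalues_pos i
  -- eigen decomposition
  set U : Matrix (Fin L) (Fin L) ℂ := (hRt.isHermitian.eigenvectorUnitary : Matrix (Fin L) (Fin L) ℂ) with hU_def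
  have hUU : U * Uᴴ = 1 := by
    rw [← Matrix.star_eq_conjTranspose]
    exact Matrix.mem_unitaryGroup_iff.mp hRt.isHermitian.eigenvectorUnitary.2
  have hU'U : Uᴴ * U = 1 := by
    rw [← Matrix.star_eq_conjTranspose]
    exact Matrix.mem_unitaryGroup_iff'.mp hRt.isHermitian.eigenvectorUnitary.2
  have hspec : Rt = U * Matrix.diagonal (fun i => (δ i : ℂ)) * Uᴴ := by
    have := hRt.isHermitian.spectral_theorem
    rw [hδ] at this
    simpa [Function.comp_def, Matrix.star_eq_conjTranspose, hU_def] using this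
  -- M and S
  set M : Matrix (Fin K) (Fin K) ℂ :=
    (σw2 : ℂ) • (1 : Matrix (Fin K) (Fin K) ℂ) + (σI2 : ℂ) • (A * Rt * Aᴴ) with hM_def
  set S : Matrix (Fin L) (Fin L) ℂ :=
    (σw2 : ℂ) • (1 : Matrix (Fin L) (Fin L) ℂ) + ((σI2 * c : ℝ) : ℂ) • Rt with hS_def
  have hMpd : M.PosDef :=
    Matrix.PosDef.add_posSemidef (my_smul_posDef Matrix.PosDef.one hσw)
      (my_smul_posSemidef (hRt.posSemidef.mul_mul_conjTranspose_same A) hσI)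
  have hSpd : S.PosDef :=
    Matrix.PosDef.add_posSemidef (my_smul_posDef Matrix.PosDef.one hσw)
      (my_smul_posSemidef hRt.posSemidef (mul_nonneg hσI hc.le))
  have hMA : M * A = A * S := by
    rw [hM_def, hS_def]
    rw [Matrix.add_mul, Matrix.mul_add, Matrix.smul_mul, Matrix.smul_mul,
      Matrix.mul_smul, Matrix.mul_smul, Matrix.one_mul, Matrix.mul_one]
    congr 1
    rw [Matrix.mul_assoc, Matrix.mul_assoc, hA, Matrix.mul_smul, Matrix.mul_one,
      ← Matrix.mul_smul, smul_smul]
    rw [Matrix.mul_smul]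
    congr 1
    push_cast [hc_def]
    ring
  have hMinvA : M⁻¹ * A = A * S⁻¹ := by
    have h1 : M⁻¹ * M = 1 := Matrix.nonsing_inv_mul M (Matrix.isUnit_iff_isUnit_det M |>.mp hMpd.isUnit)
    have h2 : S * S⁻¹ = 1 := Matrix.mul_nonsing_inv S (Matrix.isUnit_iff_isUnit_det S |>.mp hSpd.isUnit)
    calc M⁻¹ * A = M⁻¹ * A * (S * S⁻¹) := by rw [h2, Matrix.mul_one]
      _ = M⁻¹ * (M * A) * S⁻¹ := by rw [hMA]; simp only [Matrix.mul_assoc]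
      _ = A * S⁻¹ := by rw [← Matrix.mul_assoc, h1, Matrix.one_mul]
  have hAMA : Aᴴ * M⁻¹ * A = (c : ℂ) • S⁻¹ := by
    rw [Matrix.mul_assoc, hMinvA, ← Matrix.mul_assoc, hA, Matrix.smul_mul, one_mul]
  -- diagonal functions
  set s : Fin L → ℝ := fun i => σw2 + σI2 * c * δ i with hs_def
  have hspos : ∀ i, 0 < s i :=
    fun i => add_pos_of_pos_of_nonneg hσw (mul_nonneg (mul_nonneg hσI hc.le) (hδpos i).le)
  have hSspec : S = U * Matrix.diagonal (fun i => (s i : ℂ)) * Uᴴ := by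
    rw [hS_def, hspec]
    have hdiag : Matrix.diagonal (fun i => (s i : ℂ))
        = (σw2 : ℂ) • (1 : Matrix (Fin L) (Fin L) ℂ)
          + ((σI2 * c : ℝ) : ℂ) • Matrix.diagonal (fun i => (δ i : ℂ)) := by
      ext i j
      rcases eq_or_ne i j with rfl | h
      · simp [Matrix.add_apply, Matrix.smul_apply, Matrix.diagonal_apply_eq,
          Matrix.one_apply_eq, hs_def, smul_eq_mul]
      · simp [Matrix.add_apply, Matrix.smul_apply, Matrix.diagonal_apply_ne _ h,
          Matrix.one_apply_ne h]
    rw [hdiag, Matrix.mul_add, Matrix.add_mul, Matrix.mul_smul, Matrix.mul_smul,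
      Matrix.smul_mul, Matrix.smul_mul, mul_one, hUU]
  set g : Fin L → ℝ := fun i => (δ i)⁻¹ + c * (s i)⁻¹ with hg_def
  have hgpos : ∀ i, 0 < g i :=
    fun i => add_pos (inv_pos.mpr (hδpos i)) (mul_pos hc (inv_pos.mpr (hspos i)))
  have hX : Rt⁻¹ + Aᴴ * M⁻¹ * A = U * Matrix.diagonal (fun i => (g i : ℂ)) * Uᴴ := by
    rw [hAMA]
    rw [hspec, my_conj_inv U hUU hU'U _ (fun i => by exact_mod_cast (hδpos i).ne'),
      hSspec, my_conj_inv U hUU hU'U _ (fun i => by exact_mod_cast (hspos i).ne')]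
    have hdiag : Matrix.diagonal (fun i => (g i : ℂ))
        = Matrix.diagonal (fun i => ((δ i : ℂ))⁻¹)
          + (c : ℂ) • Matrix.diagonal (fun i => ((s i : ℂ))⁻¹) := by
      ext i j
      rcases eq_or_ne i j with rfl | h
      · simp [Matrix.add_apply, Matrix.smul_apply, Matrix.diagonal_apply_eq,
          hg_def, smul_eq_mul]
      · simp [Matrix.add_apply, Matrix.smul_apply, Matrix.diagonal_apply_ne _ h]
    rw [hdiag]
    simp only [Matrix.mul_add, Matrix.add_mul, Matrix.mul_smul, Matrix.smul_mul]
  rw [hX, my_conj_inv U hUU hU'U _ (fun i => by exact_mod_cast (hgpos i).ne')]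
  have htr : Matrix.trace (U * Matrix.diagonal (fun i => ((g i : ℂ))⁻¹) * Uᴴ)
      = ∑ i, ((g i : ℂ))⁻¹ := by
    rw [Matrix.trace_mul_comm, ← Matrix.mul_assoc, hU'U, one_mul, Matrix.trace_diagonal]
  rw [htr]
  refine Finset.sum_congr rfl fun i _ => ?_
  rw [← Complex.ofReal_inv]
  congr 1
  have hden : 0 < 1 + ρ * K * δ i + ρ * K * δ i * σI2 := by
    have := hδpos i
    have hρpos : 0 < ρ := by rw [hρ]; positivity
    positivity
  have hd := hδpos i
  have hs' : 0 < σw2 + σI2 * c * δ i := hspos i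
  have hnum : g i = (σw2 + σI2 * c * δ i + c * δ i) / (δ i * (σw2 + σI2 * c * δ i)) := by
    rw [hg_def, hs_def]
    field_simp
  have hden2 : 0 < σw2 + σI2 * c * δ i + c * δ i :=
    add_pos hs' (mul_pos hc hd)
  rw [hnum, inv_div, div_eq_div_iff (by positivity) hden.ne']
  rw [hρ, hc_def]
  field_simp
  ring
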